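/- Let ζ¹,…,ζ^S ∈ ℝ^L be scenarios, let p : ℝ^L → ℝ^{n₁}, o : ℝ^L → ℝ, T : ℝ^L → ℝ^{m₂×n₁} (entrywise), and h : ℝ^L → ℝ^{m₂} be affine maps, and let q ∈ ℝ^{n₂} and W ∈ ℝ^{m₂×n₂} be fixed. Define the ARC value as the infimum of w over all triples (w, u, V) with u ∈ ℝ^{n₁} and V : ℝ^L → ℝ^{n₂} an arbitrary function such that for every ζ in the convex hull of {ζ¹,…,ζ^S}: p(ζ)ᵀu + qᵀV(ζ) − w ≤ −o(ζ) and T(ζ)u + W V(ζ) ≤ h(ζ). Define the tractable value as the infimum of w over all (w, u, v¹,…,v^S) such that for every s: p(ζ^s)ᵀu + qᵀv^s − w ≤ −o(ζ^s) and T(ζ^s)u + W v^s ≤ h(ζ^s). Then the ARC value and the tractable value are equal (as infima in the extended reals). -/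

import Mathlib

lemma affmap_comb {E F : Type*} [AddCommGroup E] [Module ℝ E] [AddCommGroup F] [Module ℝ F]
    (f : E →ᵃ[ℝ] F) {ι : Type*} (t : Finset ι) (lam : ι → ℝ) (h1 : ∑ i ∈ t, lam i = 1)
    (x : ι → E) : f (∑ i ∈ t, lam i • x i) = ∑ i ∈ t, lam i • f (x i) := by
  rw [f.decomp]
  simp only [Pi.add_apply, Function.const_apply, map_sum, map_smul, smul_add]
  rw [Finset.sum_add_distrib, ← Finset.sum_smul, h1, one_smul]

theorem stmt_9 (L n₁ n₂ m₂ S : ℕ)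
    (ζs : Fin S → Fin L → ℝ)
    (p : (Fin L → ℝ) →ᵃ[ℝ] (Fin n₁ → ℝ))
    (o : (Fin L → ℝ) →ᵃ[ℝ] ℝ)
    (T : (Fin L → ℝ) →ᵃ[ℝ] Matrix (Fin m₂) (Fin n₁) ℝ)
    (h : (Fin L → ℝ) →ᵃ[ℝ] (Fin m₂ → ℝ))
    (q : Fin n₂ → ℝ) (W : Matrix (Fin m₂) (Fin n₂) ℝ) :
    sInf {wE : EReal | ∃ (w : ℝ) (u : Fin n₁ → ℝ) (V : (Fin L → ℝ) → (Fin n₂ → ℝ)),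
        wE = (w : EReal) ∧
        ∀ ζ ∈ convexHull ℝ (Set.range ζs),
          ((∑ i, p ζ i * u i) + (∑ i, q i * V ζ i) - w ≤ - o ζ ∧
            (T ζ).mulVec u + W.mulVec (V ζ) ≤ h ζ)} =
    sInf {wE : EReal | ∃ (w : ℝ) (u : Fin n₁ → ℝ) (v : Fin S → Fin n₂ → ℝ),
        wE = (w : EReal) ∧
        ∀ s, ((∑ i, p (ζs s) i * u i) + (∑ i, q i * v s i) - w ≤ - o (ζs s) ∧
          (T (ζs s)).mulVec u + W.mulVec (v s) ≤ h (ζs s))} := by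
  classical
  congr 1
  ext wE
  simp only [Set.mem_setOf_eq]
  constructor
  · rintro ⟨w, u, V, rfl, hfeas⟩
    exact ⟨w, u, fun s => V (ζs s), rfl,
      fun s => hfeas (ζs s) (subset_convexHull ℝ _ ⟨s, rfl⟩)⟩
  · rintro ⟨w, u, v, rfl, hfeas⟩
    set P : (Fin L → ℝ) → Prop := fun ζ => ∃ tw : Finset (Fin S) × (Fin S → ℝ),
      (∀ i ∈ tw.1, 0 ≤ tw.2 i) ∧ tw.1.sum tw.2 = 1 ∧
        tw.1.affineCombination ℝ ζs tw.2 = ζ with hPdef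
    refine ⟨w, u, fun ζ => if hζ : P ζ then
        ∑ s ∈ (Classical.choose hζ).1, (Classical.choose hζ).2 s • v s else 0, rfl, ?_⟩
    intro ζ hζ
    rw [convexHull_range_eq_exists_affineCombination] at hζ
    obtain ⟨t0, w0, hw0, hw1, hcomb⟩ := hζ
    have hP : P ζ := ⟨(t0, w0), hw0, hw1, hcomb⟩
    beta_reduce
    rw [dif_pos hP]
    set t := (Classical.choose hP).1 with ht
    set lam := (Classical.choose hP).2 with hlam
    obtain ⟨hlam0, hlam1, hlamc⟩ := Classical.choose_spec hP
    rw [Finset.affineCombination_eq_linear_combination _ _ _ hlam1] at hlamc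
    have hζeq : ζ = ∑ s ∈ t, lam s • ζs s := hlamc.symm
    have hp : p ζ = ∑ s ∈ t, lam s • p (ζs s) := by
      rw [hζeq]; exact affmap_comb p t lam hlam1 ζs
    have ho : o ζ = ∑ s ∈ t, lam s • o (ζs s) := by
      rw [hζeq]; exact affmap_comb o t lam hlam1 ζs
    have hT : T ζ = ∑ s ∈ t, lam s • T (ζs s) := by
      rw [hζeq]; exact affmap_comb T t lam hlam1 ζs
    have hh : h ζ = ∑ s ∈ t, lam s • h (ζs s) := by
      rw [hζeq]; exact affmap_comb h t lam hlam1 ζs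
    have key : ∀ (a b : Fin S → ℝ), (∀ s, a s ≤ b s) →
        ∑ s ∈ t, lam s * a s ≤ ∑ s ∈ t, lam s * b s := fun a b hab =>
      Finset.sum_le_sum fun s hs => mul_le_mul_of_nonneg_left (hab s) (hlam0 s hs)
    constructor
    · have e1 : (∑ i, p ζ i * u i) + (∑ i, q i * (∑ s ∈ t, lam s • v s) i) - w
          = ∑ s ∈ t, lam s * ((∑ i, p (ζs s) i * u i) + (∑ i, q i * v s i) - w) := by
        rw [hp]
        simp only [Finset.sum_apply, Pi.smul_apply, smul_eq_mul]
        simp_rw [mul_sub, mul_add, Finset.sum_sub_distrib, Finset.sum_add_distrib,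
          ← Finset.sum_mul, (show ∑ s ∈ t, lam s = 1 from hlam1), one_mul]
        congr 1
        congr 1
        · simp_rw [Finset.sum_mul, Finset.mul_sum]
          rw [Finset.sum_comm]
          exact Finset.sum_congr rfl fun s _ => Finset.sum_congr rfl fun i _ => by ring
        · simp_rw [Finset.mul_sum]
          rw [Finset.sum_comm]
          exact Finset.sum_congr rfl fun s _ => Finset.sum_congr rfl fun i _ => by ring
      have e2 : - o ζ = ∑ s ∈ t, lam s * (- o (ζs s)) := by
        rw [ho]
        simp [mul_neg, ← Finset.sum_neg_distrib]
      rw [e1, e2]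
      exact key _ _ fun s => (hfeas s).1
    · intro j
      have eT : (T ζ).mulVec u j = ∑ s ∈ t, lam s * ((T (ζs s)).mulVec u j) := by
        rw [hT]
        simp only [Matrix.mulVec, dotProduct, Finset.sum_apply, Matrix.sum_apply,
          Matrix.smul_apply, smul_eq_mul]
        simp_rw [Finset.sum_mul, Finset.mul_sum]
        rw [Finset.sum_comm]
        exact Finset.sum_congr rfl fun s _ => Finset.sum_congr rfl fun i _ => by ring
      have eW : W.mulVec (∑ s ∈ t, lam s • v s) j
          = ∑ s ∈ t, lam s * (W.mulVec (v s) j) := by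
        simp only [Matrix.mulVec, dotProduct, Finset.sum_apply, Pi.smul_apply, smul_eq_mul]
        simp_rw [Finset.mul_sum]
        rw [Finset.sum_comm]
        exact Finset.sum_congr rfl fun s _ => Finset.sum_congr rfl fun i _ => by ring
      have eh : h ζ j = ∑ s ∈ t, lam s * h (ζs s) j := by
        rw [hh]
        simp [Finset.sum_apply]
      show (T ζ).mulVec u j + W.mulVec _ j ≤ h ζ j
      rw [eT, eW, eh, ← Finset.sum_add_distrib]
      simp_rw [← mul_add]
      exact key _ _ fun s => Pi.le_def.mp (hfeas s).2 j
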